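/- arXiv:1708.05357 — 2 statements merged into one kernel-verified Lean document; each statement's English description precedes it below -/
import Mathlib

section
/- (Single-coordinate exact coordinate descent, strongly convex case.) Consider exact coordinate descent (block size m = 1, θ = 1) on O(α) = f(Aα) + Σ_i g_i(α_i), where f is convex and L-smooth, each g_i is μ-strongly convex with μ > 0, and the column norms satisfy ‖a_i‖ ≤ R for all i. Then E_j[ε⁽ᵗ⁾ | α⁽⁰⁾] ≤ (1 − ρ_min·(μ/(μ + LR²))·(1/n))ᵗ · ε⁽⁰⁾, where ρ_min := min_t E_j[ρ_{t,j} | α⁽ᵗ⁾], ρ_{t,j} := gap_j(α_j⁽ᵗ⁾)/((1/n)Σ_{i=1}^n gap_i(α_i⁽ᵗ⁾)), and expectations are over the (possibly non-uniform) random choice of the coordinate j updated in each round. -/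
set_option maxHeartbeats 1000000


/-!
STATEMENT 6: exact single-coordinate coordinate descent (block size `m = 1`, `θ = 1`) on
`O(α) = f(Aα) + Σᵢ gᵢ(αᵢ)` with `f` convex `L`-smooth, `gᵢ` `μ`-strongly convex (`μ > 0`)
and `‖aᵢ‖ ≤ R`:
`E_j[ε⁽ᵗ⁾ | α⁽⁰⁾] ≤ (1 − ρ_min (μ/(μ + LR²)) (1/n))ᵗ ε⁽⁰⁾`, with
`ρ_{t,j} := gap_j(α_j⁽ᵗ⁾)/((1/n) Σᵢ gapᵢ(αᵢ⁽ᵗ⁾))` and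
`ρ_min := min_t E_j[ρ_{t,j} | α⁽ᵗ⁾]`, encoded by `ρmin ≤ E_j[ρ_{t,j} | ℱ t]` a.s. ∀ t.
-/

open MeasureTheory Finset Real Set
open scoped RealInnerProductSpace BigOperators

noncomputable section

/-- `A α`, viewed as a vector of the Euclidean space `ℝ^d`. -/
def Amul {d n : ℕ} (A : Matrix (Fin d) (Fin n) ℝ) (x : Fin n → ℝ) :
    EuclideanSpace ℝ (Fin d) := WithLp.toLp 2 (fun j => ∑ i, A j i * x i)

/-- The `i`-th column `aᵢ` of `A`. -/
def col {d n : ℕ} (A : Matrix (Fin d) (Fin n) ℝ) (i : Fin n) :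
    EuclideanSpace ℝ (Fin d) := WithLp.toLp 2 (fun j => A j i)

/-- The convex (Fenchel) conjugate of `g : ℝ → ℝ`. -/
def conj (g : ℝ → ℝ) (x : ℝ) : ℝ := ⨆ u : ℝ, x * u - g u

/-- The objective `O(α) := f(Aα) + Σᵢ gᵢ(αᵢ)`. -/
def Obj {d n : ℕ} (A : Matrix (Fin d) (Fin n) ℝ) (f : EuclideanSpace ℝ (Fin d) → ℝ)
    (g : Fin n → ℝ → ℝ) (α : Fin n → ℝ) : ℝ := f (Amul A α) + ∑ i, g i (α i)

/-- Coordinate-wise duality gap `gapᵢ(αᵢ) := wᵀaᵢ αᵢ + gᵢ(αᵢ) + gᵢ*(−aᵢᵀw)`,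
`w := ∇f(Aα)` (`f'` is the gradient of `f`). -/
def coordGap {d n : ℕ} (A : Matrix (Fin d) (Fin n) ℝ)
    (f' : EuclideanSpace ℝ (Fin d) → EuclideanSpace ℝ (Fin d)) (g : Fin n → ℝ → ℝ)
    (α : Fin n → ℝ) (i : Fin n) : ℝ :=
  ⟪f' (Amul A α), col A i⟫ * α i + g i (α i) + conj (g i) (-⟪f' (Amul A α), col A i⟫)

/-- `ρ_{t,j} := gap_j(α_j) / ((1/n) Σ_{i∈[n]} gapᵢ(αᵢ))`. -/
def rhoCoord {d n : ℕ} (A : Matrix (Fin d) (Fin n) ℝ)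
    (f' : EuclideanSpace ℝ (Fin d) → EuclideanSpace ℝ (Fin d)) (g : Fin n → ℝ → ℝ)
    (α : Fin n → ℝ) (j : Fin n) : ℝ :=
  coordGap A f' g α j / ((1 / (n : ℝ)) * ∑ i, coordGap A f' g α i)

/-! ### auxiliary lemmas -/


lemma exists_affine_le (ψ : ℝ → ℝ) (h : ConvexOn ℝ Set.univ ψ) :
    ∃ b : ℝ, ∀ u, ψ 0 + b * u ≤ ψ u := by
  have hmono := h.slope_mono (Set.mem_univ (0:ℝ))
  have hbdd : BddBelow (slope ψ 0 '' Set.Ioi (0:ℝ)) := by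
    refine ⟨slope ψ 0 (-1), ?_⟩
    rintro y ⟨v, hv, rfl⟩
    exact hmono (by simp : (-1:ℝ) ∈ _) ⟨Set.mem_univ v, by simp [(Set.mem_Ioi.mp hv).ne']⟩
      (by linarith [Set.mem_Ioi.mp hv])
  have hne : (slope ψ 0 '' Set.Ioi (0:ℝ)).Nonempty := ⟨_, ⟨1, by simp, rfl⟩⟩
  refine ⟨sInf (slope ψ 0 '' Set.Ioi (0:ℝ)), fun u => ?_⟩
  rcases lt_trichotomy u 0 with hu | rfl | hu
  · have hub : ∀ y ∈ slope ψ 0 '' Set.Ioi (0:ℝ), slope ψ 0 u ≤ y := by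
      rintro y ⟨v, hv, rfl⟩
      exact hmono ⟨Set.mem_univ u, by simp [ne_of_lt hu]⟩ ⟨Set.mem_univ v, by simp [(Set.mem_Ioi.mp hv).ne']⟩
        (by linarith [Set.mem_Ioi.mp hv])
    have hle : slope ψ 0 u ≤ sInf (slope ψ 0 '' Set.Ioi (0:ℝ)) := le_csInf hne hub
    rw [slope_def_field] at hle
    have := (div_le_iff_of_neg (by linarith : u - 0 < 0)).mp hle
    linarith
  · simp
  · have hle : sInf (slope ψ 0 '' Set.Ioi (0:ℝ)) ≤ slope ψ 0 u :=
      csInf_le hbdd ⟨u, hu, rfl⟩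
    rw [slope_def_field] at hle
    have := (le_div_iff₀ (by linarith : (0:ℝ) < u - 0)).mp hle
    linarith

lemma conj_bdd {g : ℝ → ℝ} {μ c b : ℝ} (hμ : 0 < μ)
    (hq : ∀ u, c + b * u + μ / 2 * u ^ 2 ≤ g u) (x : ℝ) :
    BddAbove (Set.range fun u => x * u - g u) := by
  refine ⟨(x - b) ^ 2 / (2 * μ) - c, ?_⟩
  rintro y ⟨u, rfl⟩
  have h := hq u
  have h2 : (0:ℝ) ≤ (μ * u - (x - b)) ^ 2 := sq_nonneg _
  have hμ' : (0:ℝ) < 2 * μ := by linarith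
  simp only []; rw [← sub_nonneg]
  have key : (x - b) ^ 2 / (2 * μ) - c - (x * u - g u) =
      ((μ * u - (x - b)) ^ 2 / (2 * μ)) + (g u - (c + b * u + μ / 2 * u ^ 2)) := by
    field_simp
    ring
  rw [key]
  exact add_nonneg (div_nonneg h2 hμ'.le) (by linarith)

lemma fenchel_young {g : ℝ → ℝ} {μ c b : ℝ} (hμ : 0 < μ)
    (hq : ∀ u, c + b * u + μ / 2 * u ^ 2 ≤ g u) (x u : ℝ) :
    x * u - g u ≤ conj g x :=
  le_ciSup (conj_bdd hμ hq x) u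

lemma conj_convex {g : ℝ → ℝ} {μ c b : ℝ} (hμ : 0 < μ)
    (hq : ∀ u, c + b * u + μ / 2 * u ^ 2 ≤ g u) :
    ConvexOn ℝ Set.univ (conj g) := by
  refine ⟨convex_univ, fun x _ y _ a b' ha hb hab => ?_⟩
  refine ciSup_le fun u => ?_
  have h1 : x * u - g u ≤ conj g x := fenchel_young hμ hq x u
  have h2 : y * u - g u ≤ conj g y := fenchel_young hμ hq y u
  have : (a • x + b' • y) * u - g u = a * (x * u - g u) + b' * (y * u - g u) := by
    simp only [smul_eq_mul]
    have : a * g u + b' * g u = g u := by rw [← add_mul, hab, one_mul]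
    nlinarith [this]
  rw [this]
  simp only [smul_eq_mul]
  exact add_le_add (mul_le_mul_of_nonneg_left h1 ha) (mul_le_mul_of_nonneg_left h2 hb)

lemma conj_continuous {g : ℝ → ℝ} {μ c b : ℝ} (hμ : 0 < μ)
    (hq : ∀ u, c + b * u + μ / 2 * u ^ 2 ≤ g u) :
    Continuous (conj g) :=
  (conj_convex hμ hq).locallyLipschitz.continuous

section gradient
variable {E : Type*} [NormedAddCommGroup E] [InnerProductSpace ℝ E] [CompleteSpace E]

lemma line_hasDerivAt (f : E → ℝ) (f' : E → E) (hf : ∀ x, HasGradientAt f (f' x) x)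
    (x v : E) (t : ℝ) :
    HasDerivAt (fun s : ℝ => f (x + s • v)) ⟪f' (x + t • v), v⟫ t := by
  have hc : HasDerivAt (fun s : ℝ => x + s • v) v t := by
    simpa using (hasDerivAt_id t).smul_const v |>.const_add x
  have hF : HasFDerivAt f (InnerProductSpace.toDual ℝ E (f' (x + t • v))) (x + t • v) :=
    (hf (x + t • v))
  have := hF.comp_hasDerivAt t hc
  simpa [InnerProductSpace.toDual_apply_apply, Function.comp_def] using this

lemma grad_convex_ineq (f : E → ℝ) (f' : E → E) (hconv : ConvexOn ℝ Set.univ f)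
    (hf : ∀ x, HasGradientAt f (f' x) x) (x y : E) :
    f x + ⟪f' x, y - x⟫ ≤ f y := by
  set v := y - x with hv
  have hφ : ConvexOn ℝ Set.univ (fun s : ℝ => f (x + s • v)) := by
    have := hconv.comp_affineMap (AffineMap.lineMap x y)
    have heq : (fun s : ℝ => f (x + s • v)) = f ∘ (AffineMap.lineMap x y) := by
      funext s
      simp [AffineMap.lineMap_apply, hv]
      rw [add_comm]
    rw [heq]
    simpa using this
  have hd : HasDerivAt (fun s : ℝ => f (x + s • v)) ⟪f' x, v⟫ 0 := by
    simpa using line_hasDerivAt f f' hf x v 0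
  have := hφ.le_slope_of_hasDerivAt (Set.mem_univ (0:ℝ)) (Set.mem_univ (1:ℝ)) one_pos hd
  rw [slope_def_field] at this
  simp at this
  have hxy : x + v = y := by simp [hv]
  rw [hxy] at this
  linarith

lemma descent_lemma (f : E → ℝ) (f' : E → E) {L : ℝ} (hL : 0 < L)
    (hf : ∀ x, HasGradientAt f (f' x) x) (hlip : LipschitzWith L.toNNReal f')
    (x v : E) : f (x + v) ≤ f x + ⟪f' x, v⟫ + L / 2 * ‖v‖ ^ 2 := by
  set h : ℝ → ℝ := fun t => f x + t * ⟪f' x, v⟫ + L * t ^ 2 * ‖v‖ ^ 2 / 2 - f (x + t • v)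
    with hh
  have hder : ∀ t : ℝ, HasDerivAt h (⟪f' x, v⟫ + L * t * ‖v‖ ^ 2 - ⟪f' (x + t • v), v⟫) t := by
    intro t
    have h1 : HasDerivAt (fun t : ℝ => f x + t * ⟪f' x, v⟫ + L * t ^ 2 * ‖v‖ ^ 2 / 2)
        (⟪f' x, v⟫ + L * t * ‖v‖ ^ 2) t := by
      have : HasDerivAt (fun t : ℝ => f x + t * ⟪f' x, v⟫ + L * t ^ 2 * ‖v‖ ^ 2 / 2)
          (0 + (1 * ⟪f' x, v⟫) + L * (2 * t ^ 1) * ‖v‖ ^ 2 / 2) t := by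
        exact ((hasDerivAt_const t (f x)).add
          ((hasDerivAt_id t).mul_const _)).add
          ((((hasDerivAt_pow 2 t).const_mul L).mul_const (‖v‖^2)).div_const 2)
      convert this using 1
      ring
    exact h1.sub (line_hasDerivAt f f' hf x v t)
  have hnn : ∀ t ∈ Set.Ioo (0:ℝ) 1, 0 ≤ deriv h t := by
    intro t ht
    rw [(hder t).deriv]
    have h1 : ⟪f' (x + t • v), v⟫ - ⟪f' x, v⟫ ≤ L * t * ‖v‖ ^ 2 := by
      have h2 : ⟪f' (x + t • v) - f' x, v⟫ ≤ ‖f' (x + t • v) - f' x‖ * ‖v‖ :=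
        real_inner_le_norm _ _
      have h3 : ‖f' (x + t • v) - f' x‖ ≤ L * (t * ‖v‖) := by
        have := hlip.dist_le_mul (x + t • v) x
        rw [dist_eq_norm] at this
        simpa [norm_smul, abs_of_pos ht.1, Real.coe_toNNReal L hL.le, mul_assoc] using this
      rw [inner_sub_left] at h2
      nlinarith [norm_nonneg v, mul_nonneg (mul_nonneg hL.le ht.1.le) (norm_nonneg v)]
    linarith
  have hmono : MonotoneOn h (Set.Icc 0 1) := by
    apply monotoneOn_of_deriv_nonneg (convex_Icc 0 1)
    · exact (Differentiable.continuous (fun t => (hder t).differentiableAt)).continuousOn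
    · intro t _
      exact (hder t).differentiableAt.differentiableWithinAt
    · intro t ht
      rw [interior_Icc] at ht
      exact hnn t ht
  have h01 : h 0 ≤ h 1 := hmono (by norm_num) (by norm_num) zero_le_one
  simp only [hh] at h01
  norm_num at h01
  linarith
end gradient

section matrixlemmas
variable {d n : ℕ} (A : Matrix (Fin d) (Fin n) ℝ)

lemma inner_Amul (w : EuclideanSpace ℝ (Fin d)) (β : Fin n → ℝ) :
    ⟪w, Amul A β⟫ = ∑ i, ⟪w, col A i⟫ * β i := by
  simp only [PiLp.inner_apply, RCLike.inner_apply, conj_trivial, Amul, col]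
  simp only [Finset.mul_sum, Finset.sum_mul]
  rw [Finset.sum_comm]
  congr 1; funext i; congr 1; funext j; ring

lemma Amul_update (α : Fin n → ℝ) (j : Fin n) (z : ℝ) :
    Amul A (Function.update α j z) = Amul A α + (z - α j) • col A j := by
  ext k
  simp only [Amul, PiLp.add_apply, PiLp.smul_apply, col, smul_eq_mul]
  rw [← Finset.add_sum_erase _ _ (Finset.mem_univ j),
      ← Finset.add_sum_erase _ (fun i => A k i * α i) (Finset.mem_univ j)]
  rw [Finset.sum_congr rfl (fun i hi => by
    rw [Function.update_of_ne (Finset.ne_of_mem_erase hi)])]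
  simp [Function.update_self]
  ring

lemma Amul_continuous : Continuous (Amul A) := by
  have : Continuous fun (x : Fin n → ℝ) (j : Fin d) => ∑ i, A j i * x i := by
    refine continuous_pi fun j => ?_
    exact continuous_finset_sum _ fun i _ => (continuous_const.mul (continuous_apply i))
  exact (PiLp.continuous_toLp 2 (fun _ : Fin d => ℝ)).comp this
end matrixlemmas

lemma sum_update {n : ℕ} (g : Fin n → ℝ → ℝ) (α : Fin n → ℝ) (j : Fin n) (z : ℝ) :
    ∑ i, g i (Function.update α j z i) = g j z - g j (α j) + ∑ i, g i (α i) := by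
  rw [← Finset.add_sum_erase _ (fun i => g i (Function.update α j z i)) (Finset.mem_univ j),
      ← Finset.add_sum_erase _ (fun i => g i (α i)) (Finset.mem_univ j)]
  rw [Finset.sum_congr rfl (fun i hi => by
    rw [Function.update_of_ne (Finset.ne_of_mem_erase hi)])]
  simp [Function.update_self]
  ring



lemma step_ineq {d n : ℕ} (A : Matrix (Fin d) (Fin n) ℝ)
    (f : EuclideanSpace ℝ (Fin d) → ℝ)
    (f' : EuclideanSpace ℝ (Fin d) → EuclideanSpace ℝ (Fin d))
    {L μ R : ℝ} (hL : 0 < L) (hμ : 0 < μ)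
    (hfgrad : ∀ x, HasGradientAt f (f' x) x)
    (hflip : LipschitzWith L.toNNReal f')
    (g : Fin n → ℝ → ℝ)
    (hg : ∀ i, ConvexOn ℝ Set.univ (fun x => g i x - μ / 2 * x ^ 2))
    (hR : ∀ i, ‖col A i‖ ≤ R)
    (α β : Fin n → ℝ) (j : Fin n)
    (hβ : ∀ x : ℝ, Obj A f g β ≤ Obj A f g (Function.update α j x)) :
    Obj A f g β ≤ Obj A f g α - (μ / (μ + L * R ^ 2)) * coordGap A f' g α j := by
  obtain ⟨b, hb⟩ := exists_affine_le _ (hg j)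
  have hq : ∀ u, (g j 0) + b * u + μ / 2 * u ^ 2 ≤ g j u := by
    intro u
    have := hb u
    nlinarith [this]
  have sc : StrongConvexOn Set.univ μ (g j) := by
    rw [strongConvexOn_iff_convex]
    simpa only [Real.norm_eq_abs, sq_abs] using hg j
  have hR0 : 0 ≤ R := le_trans (norm_nonneg _) (hR j)
  have hden : 0 < μ + L * R ^ 2 := by positivity
  have hs0 : 0 < μ / (μ + L * R ^ 2) := by positivity
  have hs1 : μ / (μ + L * R ^ 2) ≤ 1 := by
    rw [div_le_one hden]
    nlinarith [mul_nonneg hL.le (sq_nonneg R)]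
  have h1 : μ * (1 - μ / (μ + L * R ^ 2)) = L * R ^ 2 * (μ / (μ + L * R ^ 2)) := by
    field_simp; ring
  set s := μ / (μ + L * R ^ 2) with hs
  clear_value s
  refine le_of_forall_pos_le_add fun δ hδ => ?_
  set w := f' (Amul A α) with hw
  set q : ℝ := ⟪w, col A j⟫ with hq'
  have hgap : coordGap A f' g α j = q * (α j) + g j (α j) + conj (g j) (-q) := rfl
  -- approximate maximizer of the conjugate
  have hlt : conj (g j) (-q) - δ < ⨆ u : ℝ, (-q) * u - g j u := by
    have h1 : conj (g j) (-q) - δ < conj (g j) (-q) := by linarith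
    exact h1
  obtain ⟨u, hu⟩ := exists_lt_of_lt_ciSup hlt
  set z := α j + s * (u - α j) with hz
  refine le_trans (hβ z) ?_
  -- expand the objective at the update
  have hAm : Amul A (Function.update α j z) = Amul A α + (s * (u - α j)) • col A j := by
    rw [Amul_update]
    congr 2
    rw [hz]; ring
  have hf1 : f (Amul A (Function.update α j z)) ≤
      f (Amul A α) + (s * (u - α j)) * q + L / 2 * ((s * (u - α j)) ^ 2 * ‖col A j‖ ^ 2) := by
    rw [hAm]
    have hd := descent_lemma f f' hL hfgrad hflip (Amul A α) ((s * (u - α j)) • col A j)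
    rw [real_inner_smul_right, norm_smul] at hd
    calc f (Amul A α + (s * (u - α j)) • col A j) ≤
        f (Amul A α) + s * (u - α j) * ⟪f' (Amul A α), col A j⟫ +
          L / 2 * (‖s * (u - α j)‖ * ‖col A j‖) ^ 2 := hd
      _ = f (Amul A α) + (s * (u - α j)) * q + L / 2 * ((s * (u - α j)) ^ 2 * ‖col A j‖ ^ 2) := by
          rw [mul_pow, Real.norm_eq_abs, sq_abs]
  have hg1 : ∑ i, g i (Function.update α j z i) = g j z - g j (α j) + ∑ i, g i (α i) :=
    sum_update g α j z
  -- strong convexity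
  have hzc : z = s • u + (1 - s) • (α j) := by
    simp only [smul_eq_mul, hz]; ring
  have hsc := sc.2 (Set.mem_univ u) (Set.mem_univ (α j)) hs0.le
    (by linarith : (0:ℝ) ≤ 1 - s) (by ring)
  rw [← hzc] at hsc
  simp only [smul_eq_mul, Real.norm_eq_abs, sq_abs] at hsc
  -- conjugate bound
  have hgu : g j u < -q * u - conj (g j) (-q) + δ := by linarith
  -- quadratic coefficient bound
  have hnorm : ‖col A j‖ ^ 2 ≤ R ^ 2 := by nlinarith [hR j, norm_nonneg (col A j)]
  have hcoef : L / 2 * (s ^ 2 * ‖col A j‖ ^ 2) ≤ μ / 2 * s * (1 - s) := by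
    have h2 : L / 2 * (s ^ 2 * R ^ 2) = μ / 2 * s * (1 - s) := by
      linear_combination (-(s / 2)) * h1
    have h3 := mul_le_mul_of_nonneg_left hnorm
      (mul_nonneg (by linarith : (0:ℝ) ≤ L / 2) (sq_nonneg s))
    nlinarith [h2, h3]
  have hX : (0:ℝ) ≤ (u - α j) ^ 2 := sq_nonneg _
  have hcoefX : L / 2 * (s ^ 2 * ‖col A j‖ ^ 2) * (u - α j) ^ 2 ≤
      μ / 2 * s * (1 - s) * (u - α j) ^ 2 := mul_le_mul_of_nonneg_right hcoef hX
  -- assemble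
  have hsδ : s * δ ≤ δ := by nlinarith
  have hC : s * g j u ≤ s * (-q * u - conj (g j) (-q) + δ) :=
    mul_le_mul_of_nonneg_left hgu.le hs0.le
  simp only [Obj]
  rw [hg1, hgap]
  linarith only [hf1, hsc, hC, hcoefX, hsδ]




lemma quad_bound {μ : ℝ} (hμ : 0 < μ) (g : ℝ → ℝ)
    (hg : ConvexOn ℝ Set.univ (fun x => g x - μ / 2 * x ^ 2)) :
    ∃ b : ℝ, ∀ u, g 0 + b * u + μ / 2 * u ^ 2 ≤ g u := by
  obtain ⟨b, hb⟩ := exists_affine_le _ hg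
  refine ⟨b, fun u => ?_⟩
  have := hb u
  nlinarith [this]

lemma gap_nonneg {d n : ℕ} (A : Matrix (Fin d) (Fin n) ℝ)
    (f' : EuclideanSpace ℝ (Fin d) → EuclideanSpace ℝ (Fin d))
    {μ : ℝ} (hμ : 0 < μ) (g : Fin n → ℝ → ℝ)
    (hg : ∀ i, ConvexOn ℝ Set.univ (fun x => g i x - μ / 2 * x ^ 2))
    (α : Fin n → ℝ) (i : Fin n) : 0 ≤ coordGap A f' g α i := by
  obtain ⟨b, hb⟩ := quad_bound hμ (g i) (hg i)
  have hFY := fenchel_young hμ hb (-⟪f' (Amul A α), col A i⟫) (α i)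
  rw [coordGap]
  linarith

lemma dual_bound {d n : ℕ} (A : Matrix (Fin d) (Fin n) ℝ)
    (f : EuclideanSpace ℝ (Fin d) → ℝ)
    (f' : EuclideanSpace ℝ (Fin d) → EuclideanSpace ℝ (Fin d))
    {μ : ℝ} (hμ : 0 < μ)
    (hfconv : ConvexOn ℝ Set.univ f)
    (hfgrad : ∀ x, HasGradientAt f (f' x) x)
    (g : Fin n → ℝ → ℝ)
    (hg : ∀ i, ConvexOn ℝ Set.univ (fun x => g i x - μ / 2 * x ^ 2))
    (α β : Fin n → ℝ) :
    Obj A f g α - Obj A f g β ≤ ∑ i, coordGap A f' g α i := by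
  set w := f' (Amul A α) with hw
  have hgrad := grad_convex_ineq f f' hfconv hfgrad (Amul A α) (Amul A β)
  rw [inner_sub_right, inner_Amul, inner_Amul] at hgrad
  have hFY : ∀ i, (-⟪w, col A i⟫) * (β i) - g i (β i) ≤ conj (g i) (-⟪w, col A i⟫) := by
    intro i
    obtain ⟨b, hb⟩ := quad_bound hμ (g i) (hg i)
    exact fenchel_young hμ hb _ _
  have hsum : ∑ i, ((-⟪w, col A i⟫) * (β i) - g i (β i)) ≤
      ∑ i, conj (g i) (-⟪w, col A i⟫) := Finset.sum_le_sum fun i _ => hFY i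
  have hexp : ∑ i, coordGap A f' g α i =
      ∑ i, ⟪w, col A i⟫ * α i + ∑ i, g i (α i) + ∑ i, conj (g i) (-⟪w, col A i⟫) := by
    simp only [coordGap, ← hw]
    rw [← Finset.sum_add_distrib, ← Finset.sum_add_distrib]
  simp only [Obj]
  rw [hexp]
  have h1 : ∑ i, ((-⟪w, col A i⟫) * (β i) - g i (β i)) =
      -∑ i, ⟪w, col A i⟫ * β i - ∑ i, g i (β i) := by
    rw [Finset.sum_sub_distrib, ← Finset.sum_neg_distrib]
    congr 1
    exact Finset.sum_congr rfl fun i _ => by ring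
  linarith [hsum, hgrad, h1.symm.le, h1.le]

section cont
open scoped Topology
lemma g_continuous {μ : ℝ} (g : ℝ → ℝ)
    (hg : ConvexOn ℝ Set.univ (fun x => g x - μ / 2 * x ^ 2)) : Continuous g := by
  have h1 : Continuous (fun x : ℝ => g x - μ / 2 * x ^ 2) := hg.locallyLipschitz.continuous
  have h2 : Continuous (fun x : ℝ => μ / 2 * x ^ 2) := by continuity
  have : g = fun x => (g x - μ / 2 * x ^ 2) + μ / 2 * x ^ 2 := by funext x; ring
  rw [this]
  exact h1.add h2

lemma coordGap_continuous {d n : ℕ} (A : Matrix (Fin d) (Fin n) ℝ)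
    (f' : EuclideanSpace ℝ (Fin d) → EuclideanSpace ℝ (Fin d))
    (hf'c : Continuous f') {μ : ℝ} (hμ : 0 < μ) (g : Fin n → ℝ → ℝ)
    (hg : ∀ i, ConvexOn ℝ Set.univ (fun x => g i x - μ / 2 * x ^ 2)) (i : Fin n) :
    Continuous (fun α : Fin n → ℝ => coordGap A f' g α i) := by
  obtain ⟨b, hb⟩ := quad_bound hμ (g i) (hg i)
  have hiner : Continuous (fun α : Fin n → ℝ => ⟪f' (Amul A α), col A i⟫) :=
    (hf'c.comp (Amul_continuous A)).inner continuous_const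
  exact ((hiner.mul (continuous_apply i)).add
      ((g_continuous (g i) (hg i)).comp (continuous_apply i))).add
    ((conj_continuous hμ hb).comp hiner.neg)
end cont

theorem stmt_6
    {d n : ℕ} (hn : 0 < n)
    (A : Matrix (Fin d) (Fin n) ℝ)
    (f : EuclideanSpace ℝ (Fin d) → ℝ)
    (f' : EuclideanSpace ℝ (Fin d) → EuclideanSpace ℝ (Fin d))
    (L μ R ρmin : ℝ) (hL : 0 < L) (hμ : 0 < μ)
    -- `f` is convex and `L`-smooth (differentiable with `L`-Lipschitz gradient `f'`)
    (hfconv : ConvexOn ℝ Set.univ f)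
    (hfgrad : ∀ x, HasGradientAt f (f' x) x)
    (hflip : LipschitzWith L.toNNReal f')
    -- each `gᵢ` is `μ`-strongly convex
    (g : Fin n → ℝ → ℝ)
    (hg : ∀ i, ConvexOn ℝ Set.univ (fun x => g i x - μ / 2 * x ^ 2))
    -- the column norms are bounded by `R`
    (hR : ∀ i, ‖col A i‖ ≤ R)
    -- the probability space carrying the randomized coordinate choices, with filtration
    {Ω : Type*} [m0 : MeasurableSpace Ω] (ℙ : Measure Ω) [IsProbabilityMeasure ℙ]
    (ℱ : Filtration ℕ m0)
    (jj : ℕ → Ω → Fin n) (alph : ℕ → Ω → Fin n → ℝ)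
    (hadapt : ∀ t, @Measurable Ω (Fin n) (ℱ (t + 1)) ⊤ (jj t))
    (halph : ∀ t, @Measurable Ω (Fin n → ℝ) (ℱ t) _ (alph t))
    -- exact coordinate descent: `α⁽⁰⁾ = 0`, in round `t` the coordinate `jⱼ` is updated
    -- by exact minimization over that coordinate
    (h0 : ∀ ω, alph 0 ω = 0)
    (hsupp : ∀ t ω i, i ≠ jj t ω → alph (t + 1) ω i = alph t ω i)
    (hexact : ∀ t ω, ∀ x : ℝ,
      Obj A f g (alph (t + 1) ω) ≤ Obj A f g (Function.update (alph t ω) (jj t ω) x))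
    -- `α⋆` is a minimizer of the objective
    (astar : Fin n → ℝ) (hstar : ∀ β, Obj A f g astar ≤ Obj A f g β)
    (hint : ∀ t, Integrable (fun ω => Obj A f g (alph t ω)) ℙ)
    -- `ρmin ≤ E_j[ρ_{t,j} | α⁽ᵗ⁾]` for every round `t`
    (hρ : ∀ t, ∀ᵐ ω ∂ℙ,
      ρmin ≤ (ℙ[fun ω' => rhoCoord A f' g (alph t ω') (jj t ω') | ℱ t]) ω) :
    ∀ t : ℕ,
      ∫ ω, (Obj A f g (alph t ω) - Obj A f g astar) ∂ℙ ≤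
        (1 - ρmin * (μ / (μ + L * R ^ 2)) * (1 / (n : ℝ))) ^ t *
          (Obj A f g (fun _ => 0) - Obj A f g astar) := by
  have hnR : (0:ℝ) < n := by exact_mod_cast hn
  have hR0 : 0 ≤ R := le_trans (norm_nonneg _) (hR ⟨0, hn⟩)
  have hden : 0 < μ + L * R ^ 2 := by positivity
  set s := μ / (μ + L * R ^ 2) with hs
  have hs0 : 0 < s := by rw [hs]; positivity
  have hs1 : s ≤ 1 := by
    rw [hs, div_le_one hden]; nlinarith [mul_nonneg hL.le (sq_nonneg R)]
  set c := 1 - ρmin * s * (1 / (n : ℝ)) with hc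
  -- deterministic facts
  have gapnn : ∀ (α : Fin n → ℝ) i, 0 ≤ coordGap A f' g α i := gap_nonneg A f' hμ g hg
  have hGapc : ∀ i, Continuous fun α : Fin n → ℝ => coordGap A f' g α i :=
    coordGap_continuous A f' hflip.continuous hμ g hg
  have εnn : ∀ t ω, 0 ≤ Obj A f g (alph t ω) - Obj A f g astar :=
    fun t ω => sub_nonneg.mpr (hstar _)
  have hεint : ∀ t, Integrable (fun ω => Obj A f g (alph t ω) - Obj A f g astar) ℙ :=
    fun t => (hint t).sub (integrable_const _)
  have key : ∀ t ω, Obj A f g (alph (t+1) ω) ≤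
      Obj A f g (alph t ω) - s * coordGap A f' g (alph t ω) (jj t ω) := by
    intro t ω
    rw [hs]
    exact step_ineq A f f' hL hμ hfgrad hflip g hg hR _ _ _ (hexact t ω)
  have hdual : ∀ t ω, Obj A f g (alph t ω) - Obj A f g astar ≤
      ∑ i, coordGap A f' g (alph t ω) i :=
    fun t ω => dual_bound A f f' hμ hfconv hfgrad g hg _ astar
  -- rho facts (deterministic)
  have hρ01 : ∀ (α : Fin n → ℝ) j, 0 ≤ rhoCoord A f' g α j ∧ rhoCoord A f' g α j ≤ n := by
    intro α j
    have hSnn : 0 ≤ ∑ i, coordGap A f' g α i := Finset.sum_nonneg fun i _ => gapnn α i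
    have hGle : coordGap A f' g α j ≤ ∑ i, coordGap A f' g α i :=
      Finset.single_le_sum (fun i _ => gapnn α i) (Finset.mem_univ j)
    rcases eq_or_lt_of_le hSnn with h0' | h0'
    · have hG0 : coordGap A f' g α j = 0 := le_antisymm (h0' ▸ hGle) (gapnn α j)
      rw [rhoCoord, hG0, zero_div]
      exact ⟨le_rfl, hnR.le⟩
    · constructor
      · exact div_nonneg (gapnn α j) (by positivity)
      · rw [rhoCoord, div_le_iff₀ (by positivity)]
        calc coordGap A f' g α j ≤ ∑ i, coordGap A f' g α i := hGle
          _ = (n:ℝ) * (1 / (n:ℝ) * ∑ i, coordGap A f' g α i) := by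
              field_simp
    
  have hρeq : ∀ (α : Fin n → ℝ) j, coordGap A f' g α j =
      ((1 / (n:ℝ)) * ∑ i, coordGap A f' g α i) * rhoCoord A f' g α j := by
    intro α j
    have hSnn : 0 ≤ ∑ i, coordGap A f' g α i := Finset.sum_nonneg fun i _ => gapnn α i
    rcases eq_or_lt_of_le hSnn with h0' | h0'
    · have hGle : coordGap A f' g α j ≤ ∑ i, coordGap A f' g α i :=
        Finset.single_le_sum (fun i _ => gapnn α i) (Finset.mem_univ j)
      have hG0 : coordGap A f' g α j = 0 := le_antisymm (h0' ▸ hGle) (gapnn α j)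
      rw [hG0, rhoCoord, hG0, zero_div, mul_zero]
    · rw [rhoCoord, mul_comm, div_mul_cancel₀]
      positivity
  -- measurability
  have hcompmeas : ∀ (t : ℕ) (F : (Fin n → ℝ) → Fin n → ℝ),
      (∀ j, Measurable (fun α => F α j)) →
      Measurable (fun ω => F (alph t ω) (jj t ω)) := by
    intro t F hF
    have halm : Measurable (alph t) := (halph t).mono (ℱ.le t) le_rfl
    have hjm : Measurable (jj t) := (hadapt t).mono (ℱ.le (t+1)) le_top
    have heq : (fun ω => F (alph t ω) (jj t ω)) =
        fun ω => ∑ j, if jj t ω = j then F (alph t ω) j else 0 := by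
      funext ω
      rw [Finset.sum_ite_eq _ (jj t ω) (fun j => F (alph t ω) j)]
      simp
    rw [heq]
    refine Finset.measurable_sum _ fun j _ => Measurable.ite ?_ ((hF j).comp halm)
      measurable_const
    exact hjm (measurableSet_singleton j)
  have hGmeas : ∀ t, Measurable (fun ω => coordGap A f' g (alph t ω) (jj t ω)) :=
    fun t => hcompmeas t _ fun j => (hGapc j).measurable
  have hρmeas : ∀ t, Measurable (fun ω => rhoCoord A f' g (alph t ω) (jj t ω)) := by
    intro t
    refine hcompmeas t _ fun j => Measurable.div (hGapc j).measurable ?_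
    exact (continuous_const.mul (continuous_finset_sum _ fun i _ => hGapc i)).measurable
  have hρint : ∀ t, Integrable (fun ω => rhoCoord A f' g (alph t ω) (jj t ω)) ℙ := by
    intro t
    refine Integrable.mono' (integrable_const (n:ℝ)) (hρmeas t).aestronglyMeasurable ?_
    refine Filter.Eventually.of_forall fun ω => ?_
    rw [Real.norm_eq_abs, abs_of_nonneg (hρ01 _ _).1]
    exact (hρ01 _ _).2
  -- ρmin ≤ n
  have hρn : ρmin ≤ (n:ℝ) := by
    have h1 : (ℙ[fun ω' => rhoCoord A f' g (alph 0 ω') (jj 0 ω') | ℱ 0]) ≤ᵐ[ℙ]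
        (ℙ[(fun _ => (n:ℝ)) | ℱ 0]) :=
      condExp_mono (hρint 0) (integrable_const _)
        (Filter.Eventually.of_forall fun ω => (hρ01 _ _).2)
    have h2 : (ℙ[(fun _ => (n:ℝ)) | ℱ 0]) = fun _ => (n:ℝ) := condExp_const (ℱ.le 0) _
    obtain ⟨ω, h3, h4⟩ := ((hρ 0).and h1).exists
    rw [h2] at h4
    exact le_trans h3 h4
  have hcnn : 0 ≤ c := by
    rw [hc]
    rcases le_or_gt ρmin 0 with h | h
    · nlinarith [mul_nonneg hs0.le (le_of_lt (by positivity : (0:ℝ) < 1 / (n:ℝ)))]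
    · have h1 : ρmin * s ≤ (n:ℝ) * 1 := mul_le_mul hρn hs1 hs0.le hnR.le
      have h2 : ρmin * s * (1 / (n:ℝ)) ≤ (n:ℝ) * 1 * (1 / (n:ℝ)) :=
        mul_le_mul_of_nonneg_right h1 (by positivity)
      have h3 : (n:ℝ) * 1 * (1 / (n:ℝ)) = 1 := by field_simp
      linarith
  -- main per-round inequality
  have main : ∀ t, ∫ ω, (Obj A f g (alph (t+1) ω) - Obj A f g astar) ∂ℙ ≤
      c * ∫ ω, (Obj A f g (alph t ω) - Obj A f g astar) ∂ℙ := by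
    intro t
    set ρp := max ρmin 0 with hρp
    have hρpnn : 0 ≤ ρp := le_max_right _ _
    -- integrability of the gap at the chosen coordinate
    have hGint : Integrable (fun ω => coordGap A f' g (alph t ω) (jj t ω)) ℙ := by
      refine Integrable.mono' (((hεint t).sub (hεint (t+1))).const_mul (1/s))
        (hGmeas t).aestronglyMeasurable ?_
      refine Filter.Eventually.of_forall fun ω => ?_
      rw [Real.norm_eq_abs, abs_of_nonneg (gapnn _ _)]
      simp only [Pi.sub_apply]
      have h2 : s * coordGap A f' g (alph t ω) (jj t ω) ≤
          (Obj A f g (alph t ω) - Obj A f g astar) -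
            (Obj A f g (alph (t+1) ω) - Obj A f g astar) := by linarith [key t ω]
      have h3 := mul_le_mul_of_nonneg_left h2 (le_of_lt (one_div_pos.mpr hs0))
      have h4 : (1/s) * (s * coordGap A f' g (alph t ω) (jj t ω)) =
          coordGap A f' g (alph t ω) (jj t ω) := by field_simp
      linarith
    -- condexp pull-out
    have hSmeas : StronglyMeasurable[ℱ t]
        (fun ω => (1 / (n:ℝ)) * ∑ i, coordGap A f' g (alph t ω) i) := by
      have hcont : Continuous (fun α : Fin n → ℝ =>
          (1 / (n:ℝ)) * ∑ i, coordGap A f' g α i) :=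
        continuous_const.mul (continuous_finset_sum _ fun i _ => hGapc i)
      exact (hcont.measurable.comp (halph t)).stronglyMeasurable
    have hfuneq : (fun ω => coordGap A f' g (alph t ω) (jj t ω)) =
        (fun ω => (1 / (n:ℝ)) * ∑ i, coordGap A f' g (alph t ω) i) *
          (fun ω => rhoCoord A f' g (alph t ω) (jj t ω)) := by
      funext ω
      exact hρeq (alph t ω) (jj t ω)
    have hmul : (ℙ[fun ω => coordGap A f' g (alph t ω) (jj t ω) | ℱ t]) =ᵐ[ℙ]
        (fun ω => (1 / (n:ℝ)) * ∑ i, coordGap A f' g (alph t ω) i) *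
          (ℙ[fun ω => rhoCoord A f' g (alph t ω) (jj t ω) | ℱ t]) := by
      nth_rewrite 1 [hfuneq]
      exact condExp_mul_of_stronglyMeasurable_left hSmeas (hfuneq ▸ hGint) (hρint t)
    -- a.e. lower bound for the conditional expectation of the gap
    have hae : ∀ᵐ ω ∂ℙ, ρp * (1 / (n:ℝ)) * (Obj A f g (alph t ω) - Obj A f g astar) ≤
        (ℙ[fun ω => coordGap A f' g (alph t ω) (jj t ω) | ℱ t]) ω := by
      filter_upwards [hmul, hρ t,
        condExp_nonneg (m := ℱ t) (μ := ℙ)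
          (Filter.Eventually.of_forall fun ω => (hρ01 (alph t ω) (jj t ω)).1)] with ω h1 h2 h3
      rw [h1]
      have hρple : ρp ≤ (ℙ[fun ω => rhoCoord A f' g (alph t ω) (jj t ω) | ℱ t]) ω :=
        max_le h2 h3
      have hDnn : 0 ≤ (1 / (n:ℝ)) * ∑ i, coordGap A f' g (alph t ω) i := by
        have := Finset.sum_nonneg fun i (_ : i ∈ Finset.univ) => gapnn (alph t ω) i
        positivity
      have hSge : Obj A f g (alph t ω) - Obj A f g astar ≤
          ∑ i, coordGap A f' g (alph t ω) i := hdual t ω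
      have step1 : ρp * (1 / (n:ℝ)) * (Obj A f g (alph t ω) - Obj A f g astar) ≤
          ρp * ((1 / (n:ℝ)) * ∑ i, coordGap A f' g (alph t ω) i) := by
        have : ρp * (1 / (n:ℝ)) * (Obj A f g (alph t ω) - Obj A f g astar) ≤
            ρp * (1 / (n:ℝ)) * (∑ i, coordGap A f' g (alph t ω) i) :=
          mul_le_mul_of_nonneg_left hSge (by positivity)
        linarith [this]
      refine le_trans step1 ?_
      simp only [Pi.mul_apply]
      exact mul_le_mul_of_nonneg_right hρple hDnn |>.trans_eq (mul_comm _ _) |>.trans_eq rfl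
    -- integrate
    have hGlb : ρp * (1 / (n:ℝ)) * ∫ ω, (Obj A f g (alph t ω) - Obj A f g astar) ∂ℙ ≤
        ∫ ω, coordGap A f' g (alph t ω) (jj t ω) ∂ℙ := by
      calc ρp * (1 / (n:ℝ)) * ∫ ω, (Obj A f g (alph t ω) - Obj A f g astar) ∂ℙ
          = ∫ ω, ρp * (1 / (n:ℝ)) * (Obj A f g (alph t ω) - Obj A f g astar) ∂ℙ := by
            rw [integral_const_mul]
        _ ≤ ∫ ω, (ℙ[fun ω => coordGap A f' g (alph t ω) (jj t ω) | ℱ t]) ω ∂ℙ :=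
            integral_mono_ae ((hεint t).const_mul _) integrable_condExp hae
        _ = ∫ ω, coordGap A f' g (alph t ω) (jj t ω) ∂ℙ := integral_condExp (ℱ.le t)
    have hstep : ∫ ω, (Obj A f g (alph (t+1) ω) - Obj A f g astar) ∂ℙ ≤
        ∫ ω, (Obj A f g (alph t ω) - Obj A f g astar) ∂ℙ -
          s * ∫ ω, coordGap A f' g (alph t ω) (jj t ω) ∂ℙ := by
      have h1 : ∀ ω, Obj A f g (alph (t+1) ω) - Obj A f g astar ≤
          (Obj A f g (alph t ω) - Obj A f g astar) -
            s * coordGap A f' g (alph t ω) (jj t ω) := fun ω => by linarith [key t ω]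
      calc ∫ ω, (Obj A f g (alph (t+1) ω) - Obj A f g astar) ∂ℙ
          ≤ ∫ ω, ((Obj A f g (alph t ω) - Obj A f g astar) -
              s * coordGap A f' g (alph t ω) (jj t ω)) ∂ℙ :=
            integral_mono (hεint (t+1)) ((hεint t).sub (hGint.const_mul s)) h1
        _ = ∫ ω, (Obj A f g (alph t ω) - Obj A f g astar) ∂ℙ -
              s * ∫ ω, coordGap A f' g (alph t ω) (jj t ω) ∂ℙ := by
            rw [integral_sub (hεint t) (hGint.const_mul s), integral_const_mul]
    have hεnn' : 0 ≤ ∫ ω, (Obj A f g (alph t ω) - Obj A f g astar) ∂ℙ :=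
      integral_nonneg fun ω => εnn t ω
    have hccmp : 1 - s * ρp * (1 / (n:ℝ)) ≤ c := by
      rw [hc, hρp]
      rcases le_or_gt ρmin 0 with h | h
      · rw [max_eq_right h]
        have : ρmin * s * (1/(n:ℝ)) ≤ 0 := by
          have h2 : 0 ≤ s * (1/(n:ℝ)) := by positivity
          nlinarith
        linarith
      · rw [max_eq_left h.le]
        ring_nf
        exact le_rfl
    have hmono : s * (ρp * (1 / (n:ℝ)) *
          ∫ ω, (Obj A f g (alph t ω) - Obj A f g astar) ∂ℙ) ≤
        s * ∫ ω, coordGap A f' g (alph t ω) (jj t ω) ∂ℙ :=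
      mul_le_mul_of_nonneg_left hGlb hs0.le
    calc ∫ ω, (Obj A f g (alph (t+1) ω) - Obj A f g astar) ∂ℙ
        ≤ (1 - s * ρp * (1 / (n:ℝ))) *
            ∫ ω, (Obj A f g (alph t ω) - Obj A f g astar) ∂ℙ := by nlinarith [hstep, hmono]
      _ ≤ c * ∫ ω, (Obj A f g (alph t ω) - Obj A f g astar) ∂ℙ :=
          mul_le_mul_of_nonneg_right hccmp hεnn'
  -- induction
  intro t
  induction t with
  | zero =>
    simp only [h0, pow_zero, one_mul]
    rw [integral_const]
    simp [measure_univ]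
    rfl
  | succ t ih =>
    calc ∫ ω, (Obj A f g (alph (t+1) ω) - Obj A f g astar) ∂ℙ
        ≤ c * ∫ ω, (Obj A f g (alph t ω) - Obj A f g astar) ∂ℙ := main t
      _ ≤ c * (c ^ t * (Obj A f g (fun _ => 0) - Obj A f g astar)) :=
          mul_le_mul_of_nonneg_left ih hcnn
      _ = c ^ (t+1) * (Obj A f g (fun _ => 0) - Obj A f g astar) := by ring

end
end

section
/- (Closed-form duality gap for the Lasso via the Lipschitzing trick.) Fix B > 0 and consider the modified Lasso problem O(α) = f(Aα) + Σ_i g̃_i(α_i) with f(v) := (1/(2d))‖v − b‖₂² and g̃_i(x) := λ|x| for |x| ≤ B, g̃_i(x) := +∞ for |x| > B. Then g̃_i*(u) = B·max(|u| − λ, 0), and the duality gap gap(α) := f(Aα) + Σ_i g̃_i(α_i) + f*(w) + Σ_i g̃_i*(−a_iᵀw) at w := ∇f(Aα) = (1/d)(Aα − b) equals, for every α with ‖α‖_∞ ≤ B: gap(α) = (1/d)·Σ_{i=1}^n [ α_i·a_iᵀw̃ + B·max(|a_iᵀw̃| − λd, 0) + λd·|α_i| ], where w̃ := Aα − b. 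-/
/-!
STATEMENT 16: closed-form duality gap for the Lasso via the Lipschitzing trick.  With
`f(v) := (1/(2d))‖v − b‖²` and `g̃ᵢ(x) := λ|x|` for `|x| ≤ B` (`+∞` otherwise):
`g̃ᵢ*(u) = B·max(|u| − λ, 0)`, and for every `α` with `‖α‖_∞ ≤ B`, at
`w := ∇f(Aα) = (1/d)(Aα − b)`:
`gap(α) = (1/d) Σᵢ [αᵢ aᵢᵀw̃ + B·max(|aᵢᵀw̃| − λd, 0) + λd|αᵢ|]`, `w̃ := Aα − b`.

The `B`-bounded-support function `g̃ᵢ` is modelled by the real-valued function `λ|·|` on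
`[−B, B]`; its conjugate is `g̃ᵢ*(x) = sup_{|u| ≤ B} (xu − λ|u|)`.
-/

open Finset
open scoped RealInnerProductSpace BigOperators

noncomputable section

/-- The convex conjugate of a function with `B`-bounded support. -/
def conjB (B : ℝ) (g : ℝ → ℝ) (x : ℝ) : ℝ := ⨆ u : Set.Icc (-B) B, x * (u : ℝ) - g u

/-- The convex (Fenchel) conjugate of a function on `ℝ^d`. -/
def conjVec {k : ℕ} (h : EuclideanSpace ℝ (Fin k) → ℝ) (w : EuclideanSpace ℝ (Fin k)) :
    ℝ := ⨆ u : EuclideanSpace ℝ (Fin k), ⟪w, u⟫ - h u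

lemma conjB_abs (B lam : ℝ) (hB : 0 < B) (x : ℝ) :
    conjB B (fun t => lam * |t|) x = B * max (|x| - lam) 0 := by
  unfold conjB
  haveI : Nonempty (Set.Icc (-B) B) := ⟨⟨0, by constructor <;> linarith⟩⟩
  have hbound : ∀ u : Set.Icc (-B) B,
      x * (u : ℝ) - lam * |(u : ℝ)| ≤ B * max (|x| - lam) 0 := by
    rintro ⟨u, hu1, hu2⟩
    simp only
    have h1 : x * u ≤ |x| * |u| := (le_abs_self _).trans (abs_mul x u).le
    have h2 : |u| ≤ B := abs_le.2 ⟨hu1, hu2⟩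
    rcases le_or_gt lam |x| with h | h
    · rw [max_eq_left (by linarith)]
      nlinarith [abs_nonneg u]
    · rw [max_eq_right (by linarith : |x| - lam ≤ 0)]
      nlinarith [abs_nonneg u]
  have hbdd : BddAbove (Set.range fun u : Set.Icc (-B) B =>
      x * (u : ℝ) - lam * |(u : ℝ)|) := ⟨_, by rintro _ ⟨u, rfl⟩; exact hbound u⟩
  apply le_antisymm
  · exact ciSup_le hbound
  · rcases le_or_gt lam |x| with h | h
    · rw [max_eq_left (by linarith)]
      set u₀ : ℝ := if 0 ≤ x then B else -B with hu₀
      have hmem : u₀ ∈ Set.Icc (-B) B := by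
        rcases le_or_gt 0 x with hx | hx
        · rw [hu₀, if_pos hx]; constructor <;> linarith
        · rw [hu₀, if_neg (not_le.2 hx)]; constructor <;> linarith
      have hval : x * u₀ - lam * |u₀| = B * (|x| - lam) := by
        rcases le_or_gt 0 x with hx | hx
        · rw [hu₀, if_pos hx, abs_of_nonneg hB.le, abs_of_nonneg hx]; ring
        · rw [hu₀, if_neg (not_le.2 hx), abs_of_neg hx,
            abs_of_neg (by linarith : -B < 0)]; ring
      calc B * (|x| - lam) = x * ((⟨u₀, hmem⟩ : Set.Icc (-B) B) : ℝ) - lam * |u₀| :=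
            hval.symm
        _ ≤ _ := le_ciSup hbdd ⟨u₀, hmem⟩
    · rw [max_eq_right (by linarith : |x| - lam ≤ 0), mul_zero]
      have hmem : (0:ℝ) ∈ Set.Icc (-B) B := by constructor <;> linarith
      calc (0:ℝ) = x * ((⟨0, hmem⟩ : Set.Icc (-B) B) : ℝ) - lam * |(0:ℝ)| := by simp
        _ ≤ _ := le_ciSup hbdd ⟨0, hmem⟩

lemma conjVec_quad {d : ℕ} (hd : 0 < d) (b w : EuclideanSpace ℝ (Fin d)) :
    conjVec (fun v => 1 / (2 * (d : ℝ)) * ‖v - b‖ ^ 2) w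
      = ⟪w, b⟫ + (d : ℝ) / 2 * ‖w‖ ^ 2 := by
  have hd' : (0:ℝ) < d := Nat.cast_pos.2 hd
  unfold conjVec
  have key : ∀ u : EuclideanSpace ℝ (Fin d),
      ⟪w, u⟫ - 1 / (2 * (d : ℝ)) * ‖u - b‖ ^ 2
        = (⟪w, b⟫ + (d : ℝ) / 2 * ‖w‖ ^ 2)
          - 1 / (2 * (d : ℝ)) * ‖(u - b) - (d : ℝ) • w‖ ^ 2 := by
    intro u
    have h1 : ‖(u - b) - (d : ℝ) • w‖ ^ 2
        = ‖u - b‖ ^ 2 - 2 * ⟪u - b, (d : ℝ) • w⟫ + ‖(d : ℝ) • w‖ ^ 2 :=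
      norm_sub_sq_real _ _
    have h2 : ⟪u - b, (d : ℝ) • w⟫ = (d : ℝ) * (⟪w, u⟫ - ⟪w, b⟫) := by
      rw [real_inner_smul_right, real_inner_comm, inner_sub_right]
    have h3 : ‖(d : ℝ) • w‖ ^ 2 = (d : ℝ) ^ 2 * ‖w‖ ^ 2 := by
      rw [norm_smul, Real.norm_eq_abs, abs_of_pos hd', mul_pow]
    rw [h1, h2, h3]
    field_simp
    ring
  apply le_antisymm
  · apply ciSup_le
    intro u
    rw [key u]
    have : 0 ≤ 1 / (2 * (d : ℝ)) * ‖(u - b) - (d : ℝ) • w‖ ^ 2 :=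
      mul_nonneg (by positivity) (by positivity)
    linarith
  · have hbdd : BddAbove (Set.range fun u : EuclideanSpace ℝ (Fin d) =>
        ⟪w, u⟫ - 1 / (2 * (d : ℝ)) * ‖u - b‖ ^ 2) := by
      refine ⟨⟪w, b⟫ + (d : ℝ) / 2 * ‖w‖ ^ 2, ?_⟩
      rintro _ ⟨u, rfl⟩
      simp only
      rw [key u]
      have : 0 ≤ 1 / (2 * (d : ℝ)) * ‖(u - b) - (d : ℝ) • w‖ ^ 2 :=
        mul_nonneg (by positivity) (by positivity)
      linarith
    have hval : ⟪w, b + (d : ℝ) • w⟫ - 1 / (2 * (d : ℝ)) * ‖(b + (d : ℝ) • w) - b‖ ^ 2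
        = ⟪w, b⟫ + (d : ℝ) / 2 * ‖w‖ ^ 2 := by
      rw [key (b + (d : ℝ) • w)]
      simp
    calc ⟪w, b⟫ + (d : ℝ) / 2 * ‖w‖ ^ 2 = _ := hval.symm
      _ ≤ _ := le_ciSup hbdd (b + (d : ℝ) • w)

theorem stmt_16
    {d n : ℕ} (hd : 0 < d)
    (A : Matrix (Fin d) (Fin n) ℝ) (b : EuclideanSpace ℝ (Fin d))
    (lam B : ℝ) (hlam : 0 < lam) (hB : 0 < B)
    (f : EuclideanSpace ℝ (Fin d) → ℝ)
    (hf : ∀ v, f v = 1 / (2 * (d : ℝ)) * ‖v - b‖ ^ 2) :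
    -- the conjugate of the `B`-truncated `λ|·|`
    (∀ u : ℝ, conjB B (fun x => lam * |x|) u = B * max (|u| - lam) 0) ∧
    -- closed form of the duality gap, for every `α` with `‖α‖_∞ ≤ B`
      ∀ α : Fin n → ℝ, (∀ i, |α i| ≤ B) →
        ∀ w : EuclideanSpace ℝ (Fin d), w = ((d : ℝ))⁻¹ • (Amul A α - b) →
          f (Amul A α) + (∑ i, lam * |α i|) + conjVec f w +
              (∑ i, conjB B (fun x => lam * |x|) (-⟪w, col A i⟫)) =
            (1 / (d : ℝ)) * ∑ i,
              (α i * ⟪Amul A α - b, col A i⟫ +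
                B * max (|⟪Amul A α - b, col A i⟫| - lam * (d : ℝ)) 0 +
                lam * (d : ℝ) * |α i|) := by
  constructor
  · intro u; exact conjB_abs B lam hB u
  · intro α hα w hw
    have hd' : (0:ℝ) < d := Nat.cast_pos.2 hd
    have hdne : (d:ℝ) ≠ 0 := ne_of_gt hd'
    set wt : EuclideanSpace ℝ (Fin d) := Amul A α - b with hwtdef
    have hsum : ⟪wt, Amul A α⟫ = ∑ i, α i * ⟪wt, col A i⟫ := by
      simp only [Amul, col, PiLp.toLp_apply, PiLp.inner_apply, RCLike.inner_apply, conj_trivial,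
        Finset.mul_sum, Finset.sum_mul]
      rw [Finset.sum_comm]
      exact Finset.sum_congr rfl fun i _ => Finset.sum_congr rfl fun j _ => by ring
    have hfA : f (Amul A α) = 1 / (2 * (d:ℝ)) * ‖wt‖ ^ 2 := by rw [hf]
    have hcv : conjVec f w = (d:ℝ)⁻¹ * ⟪wt, b⟫ + 1 / (2 * (d:ℝ)) * ‖wt‖ ^ 2 := by
      have hfe : f = fun v => 1 / (2 * (d:ℝ)) * ‖v - b‖ ^ 2 := funext hf
      rw [hfe, conjVec_quad hd b w, hw, real_inner_smul_left, norm_smul,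
        Real.norm_eq_abs, abs_of_nonneg (inv_nonneg.2 hd'.le), mul_pow]
      field_simp
    have hBi : ∀ i, conjB B (fun x => lam * |x|) (-⟪w, col A i⟫)
        = (1 / (d:ℝ)) * (B * max (|⟪wt, col A i⟫| - lam * (d:ℝ)) 0) := by
      intro i
      rw [conjB_abs B lam hB, abs_neg, hw, real_inner_smul_left, abs_mul,
        abs_of_nonneg (inv_nonneg.2 hd'.le)]
      have hmx : max ((d:ℝ)⁻¹ * |⟪wt, col A i⟫| - lam) 0
          = (d:ℝ)⁻¹ * max (|⟪wt, col A i⟫| - lam * (d:ℝ)) 0 := by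
        rw [mul_max_of_nonneg _ _ (inv_nonneg.2 hd'.le), mul_zero]
        congr 1
        field_simp
      rw [hmx]
      ring
    have key1 : 1 / (2 * (d:ℝ)) * ‖wt‖ ^ 2
          + ((d:ℝ)⁻¹ * ⟪wt, b⟫ + 1 / (2 * (d:ℝ)) * ‖wt‖ ^ 2)
        = (1 / (d:ℝ)) * ∑ i, α i * ⟪wt, col A i⟫ := by
      rw [← hsum]
      have hAb : ⟪wt, Amul A α⟫ = ‖wt‖ ^ 2 + ⟪wt, b⟫ := by
        rw [← real_inner_self_eq_norm_sq, ← inner_add_right]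
        congr 1
        simp [hwtdef]
      rw [hAb]
      field_simp
      ring
    have key2 : (∑ i, conjB B (fun x => lam * |x|) (-⟪w, col A i⟫))
        = (1 / (d:ℝ)) * ∑ i, B * max (|⟪wt, col A i⟫| - lam * (d:ℝ)) 0 := by
      rw [Finset.mul_sum]
      exact Finset.sum_congr rfl fun i _ => hBi i
    have key3 : (∑ i, lam * |α i|) = (1 / (d:ℝ)) * ∑ i, lam * (d:ℝ) * |α i| := by
      rw [Finset.mul_sum]
      refine Finset.sum_congr rfl fun i _ => ?_
      field_simp
    have hexp : (1 / (d:ℝ)) * ∑ i,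
          (α i * ⟪wt, col A i⟫ + B * max (|⟪wt, col A i⟫| - lam * (d:ℝ)) 0
            + lam * (d:ℝ) * |α i|)
        = (1 / (d:ℝ)) * ∑ i, α i * ⟪wt, col A i⟫
          + (1 / (d:ℝ)) * ∑ i, B * max (|⟪wt, col A i⟫| - lam * (d:ℝ)) 0
          + (1 / (d:ℝ)) * ∑ i, lam * (d:ℝ) * |α i| := by
      rw [Finset.sum_add_distrib, Finset.sum_add_distrib]
      ring
    rw [hfA, hcv, hexp, key2, key3]
    linarith [key1]

end
end
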